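/- Let Q be strictly convex, even, nonnegative, and ε > 0. If φ is a non-negative bounded measurable function on an interval J with W(φ,J) < Q(ε), then either 𝒞(φ,J) ≥ ε or V_ε(φ,J) ≤ Q(ε). -/

import Mathlib

open MeasureTheory Set Filter Topology
open scoped ENNReal

noncomputable section

/-- Lebesgue average of a (nonnegative-valued, via `ENNReal.ofReal`) function over `J`. -/
def avg (J : Set ℝ) (f : ℝ → ℝ) : ℝ≥0∞ :=
  (volume J)⁻¹ * ∫⁻ x in J, ENNReal.ofReal (f x)

/-- `V_c(φ, J) = ⟨Q(φ - c)⟩_J`. -/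
def Vc (Q φ : ℝ → ℝ) (J : Set ℝ) (c : ℝ) : ℝ≥0∞ :=
  avg J (fun x => Q (φ x - c))

/-- `V(φ, J) = inf_c V_c(φ, J)`. -/
def V (Q φ : ℝ → ℝ) (J : Set ℝ) : ℝ≥0∞ :=
  ⨅ c : ℝ, Vc Q φ J c

/-- `W(φ, J) = sup { V(φ, L) : L ⊆ J an interval }`. -/
def W (Q φ : ℝ → ℝ) (J : Set ℝ) : ℝ≥0∞ :=
  ⨆ (a : ℝ) (b : ℝ) (_ : Icc a b ⊆ J), V Q φ (Icc a b)

/-- Decreasing rearrangement of `f : [0,1] → ℝ`: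
`f*(t) = inf {λ : |{s ∈ [0,1] : f(s) > λ}| ≤ t}`. -/
def decRe (f : ℝ → ℝ) (t : ℝ) : ℝ :=
  sInf {l : ℝ | volume {s ∈ Icc (0:ℝ) 1 | l < f s} ≤ ENNReal.ofReal t}

/-- `𝒞(φ, J)`: the minimizer of `c ↦ V_c(φ, J)` (when it exists). -/
def CC (Q φ : ℝ → ℝ) (J : Set ℝ) : ℝ :=
  Classical.epsilon (fun c => ∀ c', Vc Q φ J c ≤ Vc Q φ J c')

/-- `α`-concatenation of `φ₋ : [a₋,b₋] → ℝ` and `φ₊ : [a₊,b₊] → ℝ`, as a function on `[0,1]`. -/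
def concat (φm φp : ℝ → ℝ) (am bm ap bp α : ℝ) : ℝ → ℝ :=
  fun s => if s < α then φm (am + (bm - am) * (s / α))
           else φp (ap + (bp - ap) * ((s - α) / (1 - α)))

namespace Stmt9Aux
open scoped Classical


/-! ### Integrability helpers -/

lemma intOn {f : ℝ → ℝ} {B : ℝ} (hf : Measurable f) (hB : ∀ x, |f x| ≤ B)
    {A : Set ℝ} (hA : volume A ≠ ⊤) : IntegrableOn f A volume := by
  refine Integrable.mono' (g := fun _ => B) (integrableOn_const hA)
    hf.aestronglyMeasurable.restrict ?_
  exact Eventually.of_forall fun x => by simpa [Real.norm_eq_abs] using hB x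

lemma intInt {f : ℝ → ℝ} {B : ℝ} (hf : Measurable f) (hB : ∀ x, |f x| ≤ B)
    (u v : ℝ) : IntervalIntegrable f volume u v := by
  constructor <;> exact intOn hf hB (by exact (measure_Ioc_lt_top).ne)

/-! ### Convexity facts -/

variable {Q : ℝ → ℝ}

/-- left-derivative proxy: supremum of left slopes. -/
def gQ (Q : ℝ → ℝ) (t : ℝ) : ℝ := sSup ((fun h : ℝ => (Q t - Q (t - h)) / h) '' Ioi 0)

lemma slope_lr (hQc : ConvexOn ℝ univ Q) (t : ℝ) {h h' : ℝ} (hh : 0 < h) (hh' : 0 < h') :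
    (Q t - Q (t - h)) / h ≤ (Q (t + h') - Q t) / h' := by
  have := hQc.slope_mono_adjacent (x := t - h) (y := t) (z := t + h')
    (mem_univ _) (mem_univ _) (by linarith) (by linarith)
  have e1 : t - (t - h) = h := by ring
  have e2 : t + h' - t = h' := by ring
  rwa [e1, e2] at this

lemma gQ_bdd (hQc : ConvexOn ℝ univ Q) (t : ℝ) :
    BddAbove ((fun h : ℝ => (Q t - Q (t - h)) / h) '' Ioi 0) := by
  refine ⟨(Q (t + 1) - Q t) / 1, ?_⟩
  rintro _ ⟨h, hh, rfl⟩
  exact slope_lr hQc t hh one_pos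

lemma gQ_ge (hQc : ConvexOn ℝ univ Q) (t : ℝ) {h : ℝ} (hh : 0 < h) :
    (Q t - Q (t - h)) / h ≤ gQ Q t :=
  le_csSup (gQ_bdd hQc t) (mem_image_of_mem _ hh)

lemma gQ_le (hQc : ConvexOn ℝ univ Q) (t : ℝ) {h : ℝ} (hh : 0 < h) :
    gQ Q t ≤ (Q (t + h) - Q t) / h := by
  refine csSup_le ⟨_, mem_image_of_mem _ (mem_Ioi.2 one_pos)⟩ ?_
  rintro _ ⟨h₂, hh₂, rfl⟩
  exact slope_lr hQc t hh₂ hh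

lemma gQ_subgrad (hQc : ConvexOn ℝ univ Q) (t y : ℝ) :
    Q t + (y - t) * gQ Q t ≤ Q y := by
  rcases lt_trichotomy y t with hlt | rfl | hgt
  · have h1 := gQ_ge hQc t (h := t - y) (by linarith)
    have h2 : t - (t - y) = y := by ring
    rw [h2] at h1
    have h3 : Q t - Q y ≤ (t - y) * gQ Q t := by
      rw [div_le_iff₀ (by linarith : (0:ℝ) < t - y)] at h1
      linarith
    nlinarith
  · simp
  · have h1 := gQ_le hQc t (h := y - t) (by linarith)
    have h2 : t + (y - t) = y := by ring
    rw [h2] at h1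
    rw [le_div_iff₀ (by linarith : (0:ℝ) < y - t)] at h1
    nlinarith

lemma gQ_mono (hQc : ConvexOn ℝ univ Q) : Monotone (gQ Q) := by
  intro t t' htt'
  rcases eq_or_lt_of_le htt' with rfl | hlt
  · exact le_rfl
  · have e1 : t + (t' - t) = t' := by ring
    have e2 : t' - (t' - t) = t := by ring
    calc gQ Q t ≤ (Q (t + (t' - t)) - Q t) / (t' - t) := gQ_le hQc t (by linarith)
      _ = (Q t' - Q (t' - (t' - t))) / (t' - t) := by rw [e1, e2]
      _ ≤ gQ Q t' := gQ_ge hQc t' (by linarith)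

lemma Q_zero_le (hQc : ConvexOn ℝ univ Q) (hQe : ∀ t, Q (-t) = Q t) (t : ℝ) :
    Q 0 ≤ Q t := by
  have h := hQc.2 (mem_univ (-t)) (mem_univ t) (by norm_num : (0:ℝ) ≤ 1/2)
    (by norm_num : (0:ℝ) ≤ 1/2) (by norm_num)
  simp only [smul_eq_mul] at h
  have e : (1/2 : ℝ) * (-t) + (1/2 : ℝ) * t = 0 := by ring
  rw [e] at h
  have := hQe t
  linarith

lemma Q_zero_lt (hQ : StrictConvexOn ℝ univ Q) (hQe : ∀ t, Q (-t) = Q t) {t : ℝ}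
    (ht : 0 < t) : Q 0 < Q t := by
  have h := hQ.2 (mem_univ (-t)) (mem_univ t) (ne_of_lt (by linarith) : (-t) ≠ t)
    (by norm_num : (0:ℝ) < 1/2) (by norm_num : (0:ℝ) < 1/2) (by norm_num)
  simp only [smul_eq_mul] at h
  have e : (1/2 : ℝ) * (-t) + (1/2 : ℝ) * t = 0 := by ring
  rw [e] at h
  have := hQe t
  linarith

lemma Q_abs_mono (hQc : ConvexOn ℝ univ Q) (hQe : ∀ t, Q (-t) = Q t) {u v : ℝ}
    (h : |u| ≤ v) : Q u ≤ Q v := by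
  have hv : 0 ≤ v := le_trans (abs_nonneg u) h
  rcases eq_or_lt_of_le hv with rfl | hv
  · have : u = 0 := abs_nonpos_iff.1 h
    simp [this]
  · have hu1 : -v ≤ u := neg_le_of_abs_le h
    have hu2 : u ≤ v := le_of_abs_le h
    have hθ : u = ((v - u)/(2*v)) • (-v) + ((v + u)/(2*v)) • v := by
      rw [smul_eq_mul, smul_eq_mul, div_mul_eq_mul_div, div_mul_eq_mul_div, ← add_div,
        eq_div_iff (by positivity)]
      ring
    have hsum : (v - u)/(2*v) + (v + u)/(2*v) = 1 := by field_simp; ring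
    have h2 := hQc.2 (mem_univ (-v)) (mem_univ v)
      (div_nonneg (by linarith) (by linarith) : (0:ℝ) ≤ (v - u)/(2*v))
      (div_nonneg (by linarith) (by linarith) : (0:ℝ) ≤ (v + u)/(2*v)) hsum
    rw [← hθ] at h2
    have := hQe v
    simp only [smul_eq_mul] at h2
    calc Q u ≤ ((v - u)/(2*v)) * Q (-v) + ((v + u)/(2*v)) * Q v := h2
      _ = ((v - u)/(2*v) + (v + u)/(2*v)) * Q v := by rw [this]; ring
      _ = Q v := by rw [hsum]; ring

lemma Q_meas (hQc : ConvexOn ℝ univ Q) (hQe : ∀ t, Q (-t) = Q t) : Measurable Q := by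
  have hmono : Monotone (fun y => Q (max y 0)) := by
    intro y y' hyy'
    exact Q_abs_mono hQc hQe (by
      rw [abs_of_nonneg (le_max_right y 0)]
      exact max_le_max hyy' le_rfl)
  have : Q = (fun y => Q (max y 0)) ∘ (fun x : ℝ => |x|) := by
    funext x
    rcases le_or_gt 0 x with hx | hx
    · simp [abs_of_nonneg hx, max_eq_left hx]
    · simp only [Function.comp_apply, abs_of_neg hx, max_eq_left (by linarith : (0:ℝ) ≤ -x)]
      exact (hQe x).symm
  rw [this]
  exact hmono.measurable.comp measurable_abs

lemma Q_lip (hQc : ConvexOn ℝ univ Q) (u v : ℝ) :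
    |Q u - Q v| ≤ |u - v| * (|gQ Q u| + |gQ Q v|) := by
  have h1 := gQ_subgrad hQc u v
  have h2 := gQ_subgrad hQc v u
  have e1 : (u - v) * gQ Q u ≤ |u - v| * (|gQ Q u| + |gQ Q v|) := by
    calc (u - v) * gQ Q u ≤ |(u - v) * gQ Q u| := le_abs_self _
      _ = |u - v| * |gQ Q u| := by rw [abs_mul]
      _ ≤ _ := by nlinarith [abs_nonneg (u - v), abs_nonneg (gQ Q v)]
  have e2 : (v - u) * gQ Q v ≤ |u - v| * (|gQ Q u| + |gQ Q v|) := by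
    calc (v - u) * gQ Q v ≤ |(v - u) * gQ Q v| := le_abs_self _
      _ = |u - v| * |gQ Q v| := by rw [abs_mul, abs_sub_comm]
      _ ≤ _ := by nlinarith [abs_nonneg (u - v), abs_nonneg (gQ Q u)]
  rw [abs_sub_le_iff]
  constructor <;> linarith

lemma decomp (K : Set ℝ) (hK : IsClosed K) {u v : ℝ} (huv : u < v) (hu : u ∈ K) (hv : v ∈ K)
    (f : ℝ → ℝ) (B : ℝ) (hf : Measurable f) (hB : ∀ x, |f x| ≤ B)
    (hle : ∀ x y, x ∈ K → y ∈ K → u ≤ x → x < y → y ≤ v → Ioo x y ∩ K = ∅ →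
      (∫ t in Ioo x y, f t) ≤ 0) :
    (∫ t in Ioo u v \ K, f t) ≤ 0 := by
  set Wst := Ioo u v \ K with hWstdef
  set c1 : ℝ → ℝ := fun z => sSup (K ∩ Icc u z) with hc1def
  set c2 : ℝ → ℝ := fun z => sInf (K ∩ Icc z v) with hc2def
  have hWsub : Wst ⊆ Ioo u v := diff_subset
  have hfact : ∀ z ∈ Wst, (c1 z ∈ K ∧ u ≤ c1 z ∧ c1 z < z) ∧ (c2 z ∈ K ∧ z < c2 z ∧ c2 z ≤ v) := by
    intro z hz
    obtain ⟨hzI, hzK⟩ := hz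
    have h1ne : (K ∩ Icc u z).Nonempty := ⟨u, hu, le_rfl, hzI.1.le⟩
    have h2ne : (K ∩ Icc z v).Nonempty := ⟨v, hv, hzI.2.le, le_rfl⟩
    have m1 : c1 z ∈ K ∩ Icc u z := (isCompact_Icc.inter_left hK).sSup_mem h1ne
    have m2 : c2 z ∈ K ∩ Icc z v := (isCompact_Icc.inter_left hK).sInf_mem h2ne
    refine ⟨⟨m1.1, m1.2.1, lt_of_le_of_ne m1.2.2 ?_⟩, ⟨m2.1, lt_of_le_of_ne m2.2.1 ?_, m2.2.2⟩⟩
    · intro h; exact hzK (h ▸ m1.1)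
    · intro h; exact hzK (h ▸ m2.1)
  have hbdd1 : ∀ z : ℝ, BddAbove (K ∩ Icc u z) := fun z => (bddAbove_Icc).mono inter_subset_right
  have hbdd2 : ∀ z : ℝ, BddBelow (K ∩ Icc z v) := fun z => (bddBelow_Icc).mono inter_subset_right
  have hgap : ∀ z ∈ Wst, Ioo (c1 z) (c2 z) ∩ K = ∅ := by
    intro z hz
    obtain ⟨⟨_, hc1u, hc1z⟩, ⟨_, hzc2, hc2v⟩⟩ := hfact z hz
    ext w
    simp only [mem_inter_iff, mem_Ioo, mem_empty_iff_false, iff_false, not_and]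
    intro ⟨hw1, hw2⟩ hwK
    rcases le_total w z with hwz | hzw
    · have : w ≤ c1 z := le_csSup (hbdd1 z) ⟨hwK, le_trans hc1u hw1.le, hwz⟩
      linarith
    · have : c2 z ≤ w := csInf_le (hbdd2 z) ⟨hwK, hzw, le_trans hw2.le hc2v⟩
      linarith
  have hsubW : ∀ z ∈ Wst, Ioo (c1 z) (c2 z) ⊆ Wst := by
    intro z hz w hw
    obtain ⟨⟨_, hc1u, hc1z⟩, ⟨_, hzc2, hc2v⟩⟩ := hfact z hz
    refine ⟨⟨lt_of_le_of_lt hc1u hw.1, lt_of_lt_of_le hw.2 hc2v⟩, ?_⟩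
    intro hwK
    have : w ∈ Ioo (c1 z) (c2 z) ∩ K := ⟨hw, hwK⟩
    rw [hgap z hz] at this
    exact this
  have hselfmem : ∀ z ∈ Wst, z ∈ Ioo (c1 z) (c2 z) := by
    intro z hz
    obtain ⟨⟨_, _, hc1z⟩, ⟨_, hzc2, _⟩⟩ := hfact z hz
    exact ⟨hc1z, hzc2⟩
  have hrigid : ∀ z ∈ Wst, ∀ z' ∈ Ioo (c1 z) (c2 z), c1 z' = c1 z ∧ c2 z' = c2 z := by
    intro z hz
    obtain ⟨⟨hc1K, hc1u, hc1z⟩, ⟨hc2K, hzc2, hc2v⟩⟩ := hfact z hz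
    have key1 : ∀ z'' : ℝ, c1 z < z'' → z'' < c2 z → K ∩ Icc u z'' = K ∩ Icc u (c1 z) := by
      intro z'' h1 h2
      ext w
      simp only [mem_inter_iff, mem_Icc]
      constructor
      · rintro ⟨hwK, hwu, hwz⟩
        refine ⟨hwK, hwu, ?_⟩
        by_contra hcon
        push_neg at hcon
        have : w ∈ Ioo (c1 z) (c2 z) ∩ K := ⟨⟨hcon, lt_of_le_of_lt hwz h2⟩, hwK⟩
        rw [hgap z hz] at this
        exact this
      · rintro ⟨hwK, hwu, hwz⟩
        exact ⟨hwK, hwu, le_trans hwz (le_of_lt h1)⟩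
    have key2 : ∀ z'' : ℝ, c1 z < z'' → z'' < c2 z → K ∩ Icc z'' v = K ∩ Icc (c2 z) v := by
      intro z'' h1 h2
      ext w
      simp only [mem_inter_iff, mem_Icc]
      constructor
      · rintro ⟨hwK, hwz, hwv⟩
        refine ⟨hwK, ?_, hwv⟩
        by_contra hcon
        push_neg at hcon
        have : w ∈ Ioo (c1 z) (c2 z) ∩ K := ⟨⟨lt_of_lt_of_le h1 hwz, hcon⟩, hwK⟩
        rw [hgap z hz] at this
        exact this
      · rintro ⟨hwK, hwz, hwv⟩
        exact ⟨hwK, le_trans (le_of_lt h2) hwz, hwv⟩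
    intro z' hz'
    have e1 : K ∩ Icc u z' = K ∩ Icc u (c1 z) := key1 z' hz'.1 hz'.2
    have e2 : K ∩ Icc u z = K ∩ Icc u (c1 z) := key1 z hc1z hzc2
    have e3 : K ∩ Icc z' v = K ∩ Icc (c2 z) v := key2 z' hz'.1 hz'.2
    have e4 : K ∩ Icc z v = K ∩ Icc (c2 z) v := key2 z hc1z hzc2
    constructor
    · show sSup (K ∩ Icc u z') = sSup (K ∩ Icc u z)
      rw [e1, e2]
    · show sInf (K ∩ Icc z' v) = sInf (K ∩ Icc z v)
      rw [e3, e4]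
  -- enumeration
  -- enumeration
  set e : ℕ → ℚ := fun n => (Denumerable.eqv ℚ).symm n with hedef
  have hesurj : Function.Surjective e := (Denumerable.eqv ℚ).symm.surjective
  set P : ℕ → Prop := fun n => ((e n : ℝ) ∈ Wst ∧ ∀ m < n, ¬((e m : ℝ) ∈ Wst ∧
      Ioo (c1 (e m)) (c2 (e m)) = Ioo (c1 (e n)) (c2 (e n)))) with hPdef
  set F : ℕ → Set ℝ := fun n => if P n then Ioo (c1 (e n)) (c2 (e n)) else ∅ with hFdef
  have hFcases : ∀ n, (P n ∧ F n = Ioo (c1 (e n)) (c2 (e n))) ∨ F n = ∅ := by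
    intro n
    by_cases h : P n
    · exact Or.inl ⟨h, by simp only [hFdef, if_pos h]⟩
    · exact Or.inr (by simp only [hFdef, if_neg h])
  have hFsubW : ∀ n, F n ⊆ Wst := by
    intro n
    rcases hFcases n with ⟨hP, hEq⟩ | hEq
    · rw [hEq]; exact hsubW _ hP.1
    · rw [hEq]; exact empty_subset _
  have hcover : ∀ z ∈ Wst, ∃ n, z ∈ F n := by
    intro z hz
    obtain ⟨⟨_, _, hc1z⟩, ⟨_, hzc2, _⟩⟩ := hfact z hz
    obtain ⟨q, hq1, hq2⟩ := exists_rat_btwn (lt_trans hc1z hzc2)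
    have hqmem : (q : ℝ) ∈ Ioo (c1 z) (c2 z) := ⟨hq1, hq2⟩
    have hqW : (q : ℝ) ∈ Wst := hsubW z hz hqmem
    have hqc := hrigid z hz _ hqmem
    have hPex : ∃ n, ((e n : ℝ) ∈ Wst ∧
        Ioo (c1 (e n)) (c2 (e n)) = Ioo (c1 z) (c2 z)) := by
      obtain ⟨n, hn⟩ := hesurj q
      exact ⟨n, by rw [hn]; exact ⟨hqW, by rw [hqc.1, hqc.2]⟩⟩
    set n₀ := Nat.find hPex with hn₀def
    have hPn := Nat.find_spec hPex
    have hcond : P n₀ := by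
      refine ⟨hPn.1, ?_⟩
      intro m hm hcon
      exact Nat.find_min hPex hm ⟨hcon.1, by rw [hcon.2, hPn.2]⟩
    refine ⟨n₀, ?_⟩
    have : F n₀ = Ioo (c1 (e n₀)) (c2 (e n₀)) := by simp only [hFdef, if_pos hcond]
    rw [this, hPn.2]
    exact hselfmem z hz
  have hdisj : Pairwise (Function.onFun Disjoint F) := by
    have key : ∀ m n, m < n → Disjoint (F m) (F n) := by
      intro m n hmn
      rcases hFcases m with ⟨hPm, hEm⟩ | hEm
      · rcases hFcases n with ⟨hPn, hEn⟩ | hEn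
        · have hne : Ioo (c1 (e m)) (c2 (e m)) ≠ Ioo (c1 (e n)) (c2 (e n)) := by
            intro hcon
            exact hPn.2 m hmn ⟨hPm.1, hcon⟩
          rw [hEm, hEn, Set.disjoint_left]
          intro w hwm hwn
          have hwW : w ∈ Wst := hsubW _ hPm.1 hwm
          have r1 := hrigid _ hPm.1 w hwm
          have r2 := hrigid _ hPn.1 w hwn
          exact hne (by rw [← r1.1, ← r1.2, r2.1, r2.2])
        · rw [hEn]; exact disjoint_empty _
      · rw [hEm]; exact empty_disjoint _
    intro m n hmn
    rcases lt_or_gt_of_ne hmn with h | h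
    · exact key m n h
    · exact (key n m h).symm
  have hunion : (⋃ n, F n) = Wst := by
    apply subset_antisymm
    · exact iUnion_subset hFsubW
    · intro z hz
      obtain ⟨n, hn⟩ := hcover z hz
      exact mem_iUnion.2 ⟨n, hn⟩
  have hmeasF : ∀ n, MeasurableSet (F n) := by
    intro n
    rcases hFcases n with ⟨_, hEq⟩ | hEq
    · rw [hEq]; exact measurableSet_Ioo
    · rw [hEq]; exact MeasurableSet.empty
  have hvolW : volume Wst ≠ ⊤ := by
    refine ne_top_of_le_ne_top ?_ (measure_mono hWsub)
    exact (measure_Ioo_lt_top).ne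
  have hIntW : IntegrableOn f Wst volume := intOn hf hB hvolW
  have hIntU : IntegrableOn f (⋃ n, F n) volume := by rw [hunion]; exact hIntW
  have : (∫ t in Wst, f t) = ∑' n, ∫ t in F n, f t := by
    rw [← hunion]
    exact integral_iUnion hmeasF hdisj hIntU
  rw [this]
  apply tsum_nonpos
  intro n
  rcases hFcases n with ⟨hP, hEq⟩ | hEq
  · rw [hEq]
    obtain ⟨⟨hc1K, hc1u, hc1z⟩, ⟨hc2K, hzc2, hc2v⟩⟩ := hfact _ hP.1
    exact hle (c1 (e n)) (c2 (e n)) hc1K hc2K hc1u (lt_trans hc1z hzc2) hc2v (hgap _ hP.1)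
  · rw [hEq]
    simp


lemma exists_balanced (s d : ℝ → ℝ) (hs : Measurable s) (hd : Measurable d)
    (Bs Bd : ℝ) (hBs : ∀ x, |s x| ≤ Bs) (hBd : ∀ x, |d x| ≤ Bd)
    (γ : ℝ) (hγ : 0 < γ) (hsd : ∀ x, 0 < d x → γ ≤ s x)
    {a b : ℝ} (hab : a < b)
    (hS : (∫ t in a..b, s t) ≤ 0) (hD : 0 < (∫ t in a..b, d t)) :
    ∃ x y, a ≤ x ∧ x < y ∧ y ≤ b ∧ (∫ t in x..y, s t) = 0 ∧ 0 ≤ (∫ t in x..y, d t) := by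
  by_contra hNO
  push_neg at hNO
  -- hNO : ∀ x y, a ≤ x → x < y → y ≤ b → (∫ t in x..y, s t) = 0 → (∫ t in x..y, d t) < 0
  have hsint : ∀ u v : ℝ, IntervalIntegrable s volume u v := intInt hs hBs
  have hdint : ∀ u v : ℝ, IntervalIntegrable d volume u v := intInt hd hBd
  set S : ℝ → ℝ := fun x => ∫ t in a..x, s t with hSdef
  set D : ℝ → ℝ := fun x => ∫ t in a..x, d t with hDdef
  have contS : Continuous S := intervalIntegral.continuous_primitive hsint a
  have contD : Continuous D := intervalIntegral.continuous_primitive hdint a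
  have Sdiff : ∀ x y : ℝ, (∫ t in x..y, s t) = S y - S x := by
    intro x y
    have := intervalIntegral.integral_add_adjacent_intervals (hsint a x) (hsint x y)
    simp only [hSdef] at *
    linarith
  have Ddiff : ∀ x y : ℝ, (∫ t in x..y, d t) = D y - D x := by
    intro x y
    have := intervalIntegral.integral_add_adjacent_intervals (hdint a x) (hdint x y)
    simp only [hDdef] at *
    linarith
  have hSa : S a = 0 := intervalIntegral.integral_same
  have hDa : D a = 0 := intervalIntegral.integral_same
  have hSb : S b ≤ 0 := hS
  have hDb : 0 < D b := hD
  -- the minimal point y₀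
  set Bset : Set ℝ := {y | y ∈ Icc a b ∧ S y ≤ 0 ∧ D b ≤ D y} with hBsetdef
  have hBclosed : IsClosed Bset := by
    have : Bset = Icc a b ∩ ({y | S y ≤ 0} ∩ {y | D b ≤ D y}) := by
      ext y; simp [hBsetdef, mem_Icc, and_assoc]
    rw [this]
    exact isClosed_Icc.inter ((isClosed_le contS continuous_const).inter
      (isClosed_le continuous_const contD))
  have hBne : Bset.Nonempty := ⟨b, ⟨hab.le, le_rfl⟩, hSb, le_rfl⟩
  have hBbdd : BddBelow Bset := ⟨a, fun y hy => hy.1.1⟩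
  set y₀ := sInf Bset with hy₀def
  have hy₀mem : y₀ ∈ Bset := hBclosed.csInf_mem hBne hBbdd
  have hy₀min : ∀ y ∈ Bset, y₀ ≤ y := fun y hy => csInf_le hBbdd hy
  have hay₀ : a < y₀ := by
    rcases eq_or_lt_of_le hy₀mem.1.1 with h | h
    · exfalso
      have : D b ≤ D a := by rw [h]; exact hy₀mem.2.2
      rw [hDa] at this
      linarith
    · exact h
  have hy₀b : y₀ ≤ b := hy₀mem.1.2
  rcases eq_or_lt_of_le hy₀mem.2.1 with hSy₀ | hSy₀
  · -- case S y₀ = 0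
    have h0 : (∫ t in a..y₀, s t) = 0 := by rw [Sdiff, ← hSy₀, hSa]; ring
    have := hNO a y₀ le_rfl hay₀ hy₀b h0
    rw [Ddiff, hDa] at this
    linarith [hy₀mem.2.2]
  · -- case S y₀ < 0
    set A : Set ℝ := {x | x ∈ Icc a y₀ ∧ S x ≤ S y₀} with hAdef
    have hAclosed : IsClosed A := by
      have : A = Icc a y₀ ∩ {x | S x ≤ S y₀} := by ext x; simp [hAdef]
      rw [this]
      exact isClosed_Icc.inter (isClosed_le contS continuous_const)
    have hAne : A.Nonempty := ⟨y₀, ⟨hay₀.le, le_rfl⟩, le_rfl⟩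
    have hAbdd : BddBelow A := ⟨a, fun x hx => hx.1.1⟩
    set q := sInf A with hqdef
    have hqmem : q ∈ A := hAclosed.csInf_mem hAne hAbdd
    have hqmin : ∀ x ∈ A, q ≤ x := fun x hx => csInf_le hAbdd hx
    have haq : a < q := by
      rcases eq_or_lt_of_le hqmem.1.1 with h | h
      · exfalso
        have : S q ≤ S y₀ := hqmem.2
        rw [← h, hSa] at this
        linarith
      · exact h
    have hSq : S q = S y₀ := by
      rcases eq_or_lt_of_le hqmem.2 with h | h
      · exact h
      · exfalso
        have hiv : S y₀ ∈ Icc (S q) (S a) := ⟨h.le, by rw [hSa]; linarith⟩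
        obtain ⟨t, ht, hSt⟩ := intermediate_value_Icc' hqmem.1.1 contS.continuousOn hiv
        have htA : t ∈ A := ⟨⟨ht.1, le_trans ht.2 hqmem.1.2⟩, le_of_eq hSt⟩
        have : q ≤ t := hqmin t htA
        have : t = q := le_antisymm ht.2 this
        rw [this] at hSt
        linarith
    rcases eq_or_lt_of_le hqmem.1.2 with hqy₀ | hqy₀
    · -- q = y₀ : the contact-set decomposition
      -- S t > S y₀ on [a, y₀)
      have hSgt : ∀ t, a ≤ t → t < y₀ → S y₀ < S t := by
        intro t hat hty₀
        by_contra hcon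
        push_neg at hcon
        have htA : t ∈ A := ⟨⟨hat, hty₀.le⟩, hcon⟩
        have := hqmin t htA
        rw [hqy₀] at this
        linarith
      -- contact set
      set C : Set ℝ := {x | x ∈ Icc a y₀ ∧ ∀ w ∈ Icc a x, S x ≤ S w} with hCdef
      have haC : a ∈ C := by
        refine ⟨⟨le_rfl, hay₀.le⟩, ?_⟩
        intro w hw
        have : w = a := le_antisymm hw.2 hw.1
        rw [this]
      have hy₀C : y₀ ∈ C := by
        refine ⟨⟨hay₀.le, le_rfl⟩, ?_⟩
        intro w hw
        rcases eq_or_lt_of_le hw.2 with h | h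
        · rw [h]
        · exact (hSgt w hw.1 h).le
      have hCclosed : IsClosed C := by
        have hCeq : C = Icc a y₀ ∩ ⋂ (w : ℝ),
            (if a ≤ w then (Iic w ∪ {x | S x ≤ S w}) else univ) := by
          ext x
          simp only [hCdef, mem_setOf_eq, mem_inter_iff, mem_iInter, mem_Icc]
          constructor
          · rintro ⟨hx1, hx2⟩
            refine ⟨hx1, fun w => ?_⟩
            by_cases hw : a ≤ w
            · rw [if_pos hw]
              rcases le_or_gt x w with h | h
              · exact Or.inl h
              · exact Or.inr (hx2 w ⟨hw, h.le⟩)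
            · rw [if_neg hw]; trivial
          · rintro ⟨hx1, hx2⟩
            refine ⟨hx1, fun w hw => ?_⟩
            have hxw := hx2 w
            rw [if_pos hw.1] at hxw
            rcases hxw with h | h
            · have : x = w := le_antisymm h hw.2
              rw [this]
            · exact h
        rw [hCeq]
        refine isClosed_Icc.inter (isClosed_iInter fun w => ?_)
        by_cases hw : a ≤ w
        · rw [if_pos hw]
          exact isClosed_Iic.union (isClosed_le contS continuous_const)
        · rw [if_neg hw]
          exact isClosed_univ
      have hCmeas : MeasurableSet C := hCclosed.measurableSet
      -- excursions have equal S-values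
      have key1 : ∀ x y, x ∈ C → y ∈ C → x < y → Ioo x y ∩ C = ∅ → S x = S y := by
        intro x y hxC hyC hxy hgapC
        have hax : a ≤ x := hxC.1.1
        have hyy₀ : y ≤ y₀ := hyC.1.2
        have step : ∀ z ∈ Ioo x y, S x ≤ S z := by
          intro z hz
          obtain ⟨τ, hτmem, hτmin⟩ := isCompact_Icc.exists_isMinOn
            (nonempty_Icc.2 hz.1.le) contS.continuousOn
          have hτx : S τ ≤ S x := isMinOn_iff.1 hτmin x ⟨le_rfl, hz.1.le⟩
          have hτC : τ ∈ C := by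
            refine ⟨⟨le_trans hax hτmem.1, le_trans hτmem.2 (le_trans hz.2.le hyy₀)⟩, ?_⟩
            intro w hw
            rcases le_total w x with hwx | hxw
            · exact le_trans hτx (hxC.2 w ⟨hw.1, hwx⟩)
            · exact isMinOn_iff.1 hτmin w ⟨hxw, le_trans hw.2 hτmem.2⟩
          have hτeq : τ = x := by
            by_contra hne
            have h1 : τ ∈ Ioo x y :=
              ⟨lt_of_le_of_ne hτmem.1 (Ne.symm hne), lt_of_le_of_lt hτmem.2 hz.2⟩
            have h2 : τ ∈ Ioo x y ∩ C := ⟨h1, hτC⟩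
            rw [hgapC] at h2
            exact h2
          have := isMinOn_iff.1 hτmin z ⟨hz.1.le, le_rfl⟩
          rw [hτeq] at this
          exact this
        have h1 : S x ≤ S y := by
          have ht : Tendsto S (𝓝[<] y) (𝓝 (S y)) := (contS.tendsto y).mono_left nhdsWithin_le_nhds
          refine ge_of_tendsto ht ?_
          filter_upwards [Ioo_mem_nhdsLT_of_mem (⟨hxy, le_rfl⟩ : y ∈ Ioc x y)] with z hz
          exact step z hz
        exact le_antisymm h1 (hyC.2 x ⟨hax, hxy.le⟩)
      -- a.e. on C, s ≤ 0
      have hsLI : LocallyIntegrable s volume :=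
        locallyIntegrable_iff.2 fun k hk => intOn hs hBs hk.measure_lt_top.ne
      have hae := IsUnifLocDoublingMeasure.ae_tendsto_average_norm_sub
        (volume : Measure ℝ) hsLI 1
      have key3 : ∀ᵐ x, x ∈ C → a < x → s x ≤ 0 := by
        filter_upwards [hae] with x hx hxC hax
        by_contra hpos
        push_neg at hpos
        have hT : Tendsto (fun r : ℝ => ⨍ y in Metric.closedBall x r, ‖s y - s x‖)
            (𝓝[>] (0:ℝ)) (𝓝 0) := by
          refine hx (fun _ => x) id tendsto_id ?_
          filter_upwards [self_mem_nhdsWithin] with r hr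
          exact Metric.mem_closedBall_self (by simp at hr ⊢; linarith)
        have hev1 : ∀ᶠ r in 𝓝[>] (0:ℝ),
            (⨍ y in Metric.closedBall x r, ‖s y - s x‖) < s x / 4 := by
          have : (0:ℝ) < s x / 4 := by linarith
          exact hT.eventually (Filter.Tendsto.eventually_lt_const this tendsto_id) |>.mono (fun r hr => hr)
        have hev2 : Ioo (0:ℝ) (x - a) ∈ 𝓝[>] (0:ℝ) :=
          Ioo_mem_nhdsGT_of_mem ⟨le_rfl, by linarith⟩
        obtain ⟨r, hr1, hr2⟩ := (hev1.and hev2).exists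
        obtain ⟨hr0, hrxa⟩ := hr2
        -- contact inequality
        have hCineq : S x ≤ S (x - r) := hxC.2 (x - r) ⟨by linarith, by linarith⟩
        have hint0 : (∫ t in Ioc (x-r) x, s t) ≤ 0 := by
          have := Sdiff (x - r) x
          rw [intervalIntegral.integral_of_le (by linarith : x - r ≤ x)] at this
          linarith
        -- lower bound via the Lebesgue point
        have hcb : Metric.closedBall x r = Icc (x - r) (x + r) := Real.closedBall_eq_Icc
        have hIoccb : Ioc (x-r) x ⊆ Metric.closedBall x r := by
          rw [hcb]; intro t ht; exact ⟨ht.1.le, by linarith [ht.2]⟩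
        have hintcb : IntegrableOn (fun y => ‖s y - s x‖) (Metric.closedBall x r) volume := by
          refine intOn (B := Bs + |s x|) ?_ ?_ ?_
          · exact (hs.sub measurable_const).norm
          · intro y
            simp only [Real.norm_eq_abs, abs_abs]
            calc |s y - s x| ≤ |s y| + |s x| := abs_sub _ _
              _ ≤ Bs + |s x| := by linarith [hBs y]
          · rw [hcb]; exact (by exact measure_Icc_lt_top.ne)
        have hvolcb : (volume (Metric.closedBall x r)).toReal = 2 * r := by
          rw [hcb, Real.volume_Icc]
          rw [ENNReal.toReal_ofReal (by linarith)]
          ring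
        have havg : (∫ y in Metric.closedBall x r, ‖s y - s x‖) =
            (volume (Metric.closedBall x r)).toReal *
              (⨍ y in Metric.closedBall x r, ‖s y - s x‖) := by
          rw [setAverage_eq]
          rw [smul_eq_mul, ← mul_assoc]
          rw [← measureReal_def, mul_inv_cancel₀ (by rw [measureReal_def, hvolcb]; positivity), one_mul]
        have hbound1 : (∫ t in Ioc (x-r) x, ‖s t - s x‖) ≤
            (∫ y in Metric.closedBall x r, ‖s y - s x‖) := by
          refine setIntegral_mono_set hintcb ?_ (HasSubset.Subset.eventuallyLE hIoccb)
          exact Eventually.of_forall fun y => norm_nonneg _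
        have hbound2 : (∫ y in Metric.closedBall x r, ‖s y - s x‖) < 2 * r * (s x / 4) := by
          rw [havg, hvolcb]
          have h2r : (0:ℝ) < 2 * r := by linarith
          exact (mul_lt_mul_iff_right₀ h2r).2 hr1
        have hlow : r * s x - (∫ t in Ioc (x-r) x, ‖s t - s x‖) ≤ (∫ t in Ioc (x-r) x, s t) := by
          have hvol : (volume (Ioc (x-r) x)).toReal = r := by
            rw [Real.volume_Ioc]
            rw [ENNReal.toReal_ofReal (by linarith)]
            ring_nf
          have hintIoc : IntegrableOn s (Ioc (x-r) x) volume := intOn hs hBs measure_Ioc_lt_top.ne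
          have hintIoc2 : IntegrableOn (fun t => ‖s t - s x‖) (Ioc (x-r) x) volume :=
            hintcb.mono_set hIoccb
          have hpt : ∀ t ∈ Ioc (x-r) x, s x - ‖s t - s x‖ ≤ s t := by
            intro t _
            have : |s t - s x| ≥ -(s t - s x) := neg_le_abs _
            simp only [Real.norm_eq_abs]
            linarith
          calc r * s x - (∫ t in Ioc (x-r) x, ‖s t - s x‖)
              = (∫ t in Ioc (x-r) x, (s x - ‖s t - s x‖)) := by
                rw [integral_sub (integrableOn_const measure_Ioc_lt_top.ne :
                  IntegrableOn (fun _ => s x) (Ioc (x-r) x) volume) hintIoc2]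
                rw [setIntegral_const, measureReal_def, hvol, smul_eq_mul]
            _ ≤ ∫ t in Ioc (x-r) x, s t :=
                setIntegral_mono_on (integrableOn_const measure_Ioc_lt_top.ne
                  |>.sub hintIoc2) hintIoc measurableSet_Ioc hpt
        have : (0:ℝ) < ∫ t in Ioc (x-r) x, s t := by
          nlinarith [hbound1, hbound2, hlow]
        linarith
      -- the decomposition bound
      have hexc : ∀ x y, x ∈ C → y ∈ C → a ≤ x → x < y → y ≤ y₀ → Ioo x y ∩ C = ∅ →
          (∫ t in Ioo x y, d t) ≤ 0 := by
        intro x y hxC hyC hax hxy hyy₀ hgapC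
        have hSeq := key1 x y hxC hyC hxy hgapC
        have h0 : (∫ t in x..y, s t) = 0 := by rw [Sdiff, hSeq]; ring
        have := hNO x y hax hxy (le_trans hyy₀ hy₀b) h0
        rw [← integral_Ioc_eq_integral_Ioo, ← intervalIntegral.integral_of_le hxy.le]
        exact this.le
      have hdecomp := decomp C hCclosed hay₀ haC hy₀C d Bd hd hBd hexc
      have key4 : (∫ t in C ∩ Ioc a y₀, d t) ≤ 0 := by
        have haed : ∀ᵐ x ∂(volume.restrict (C ∩ Ioc a y₀)), d x ≤ 0 := by
          rw [ae_restrict_iff' (hCmeas.inter measurableSet_Ioc)]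
          filter_upwards [key3] with x hx hmem
          by_contra hcon
          push_neg at hcon
          have := hsd x hcon
          have := hx hmem.1 hmem.2.1
          linarith
        exact integral_nonpos_of_ae haed
      have hsplit : Ioc a y₀ = (Ioo a y₀ \ C) ∪ (C ∩ Ioc a y₀) := by
        ext x
        constructor
        · intro hx
          by_cases hxC : x ∈ C
          · exact Or.inr ⟨hxC, hx⟩
          · refine Or.inl ⟨⟨hx.1, ?_⟩, hxC⟩
            rcases eq_or_lt_of_le hx.2 with h | h
            · exact absurd (h ▸ hy₀C) hxC
            · exact h
        · rintro (⟨hx, _⟩ | ⟨_, hx⟩)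
          · exact ⟨hx.1, hx.2.le⟩
          · exact hx
      have hdisj2 : Disjoint (Ioo a y₀ \ C) (C ∩ Ioc a y₀) := by
        rw [Set.disjoint_left]
        rintro x ⟨_, hxC⟩ ⟨hxC', _⟩
        exact hxC hxC'
      have hfinal : (∫ t in Ioc a y₀, d t) ≤ 0 := by
        rw [hsplit, setIntegral_union hdisj2 (hCmeas.inter measurableSet_Ioc)
          (intOn hd hBd (ne_top_of_le_ne_top measure_Ioo_lt_top.ne
            (measure_mono diff_subset)))
          (intOn hd hBd (ne_top_of_le_ne_top measure_Ioc_lt_top.ne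
            (measure_mono inter_subset_right)))]
        linarith
      have : D y₀ ≤ 0 := by
        have := Ddiff a y₀
        rw [intervalIntegral.integral_of_le hay₀.le, hDa] at this
        linarith
      linarith [hy₀mem.2.2]
    · -- q < y₀
      have h0 : (∫ t in q..y₀, s t) = 0 := by rw [Sdiff, hSq]; ring
      have hlt := hNO q y₀ haq.le hqy₀ hy₀b h0
      rw [Ddiff] at hlt
      have hqB : q ∈ Bset := ⟨⟨haq.le, le_trans hqmem.1.2 hy₀b⟩, by rw [hSq]; exact hSy₀.le,
        by linarith [hy₀mem.2.2]⟩
      have := hy₀min q hqB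
      linarith


end Stmt9Aux

theorem stmt9 (Q : ℝ → ℝ) (hQ : StrictConvexOn ℝ univ Q) (hQe : ∀ t, Q (-t) = Q t)
    (hQ0 : ∀ t, 0 ≤ Q t) (ε : ℝ) (hε : 0 < ε)
    (φ : ℝ → ℝ) (hφ : Measurable φ) (a b : ℝ) (hab : a < b)
    (hnn : ∀ x ∈ Icc a b, 0 ≤ φ x) (M : ℝ) (hbd : ∀ x ∈ Icc a b, φ x ≤ M)
    (hW : W Q φ (Icc a b) < ENNReal.ofReal (Q ε)) :
    ε ≤ CC Q φ (Icc a b) ∨ Vc Q φ (Icc a b) ε ≤ ENNReal.ofReal (Q ε) := by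
  classical
  by_cases hVe : Vc Q φ (Icc a b) ε ≤ ENNReal.ofReal (Q ε)
  · exact Or.inr hVe
  · left
    by_contra hCC
    push_neg at hCC
    exfalso
    have hQc : ConvexOn ℝ univ Q := hQ.convexOn
    have hvolJ : volume (Icc a b) = ENNReal.ofReal (b - a) := Real.volume_Icc
    have hvolJ0 : volume (Icc a b) ≠ 0 := by
      rw [hvolJ]
      simp only [ne_eq, ENNReal.ofReal_eq_zero, not_le]
      linarith
    have hvolJT : volume (Icc a b) ≠ ⊤ := by rw [hvolJ]; exact ENNReal.ofReal_ne_top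
    have haJ : a ∈ Icc a b := ⟨le_rfl, hab.le⟩
    have hM0 : (0:ℝ) ≤ M := le_trans (hnn a haJ) (hbd a haJ)
    -- truncation of φ
    set φt : ℝ → ℝ := fun x => max 0 (min M (φ x)) with hφtdef
    have hφtm : Measurable φt := measurable_const.max (measurable_const.min hφ)
    have hφt0 : ∀ x, 0 ≤ φt x := fun x => le_max_left _ _
    have hφtM : ∀ x, φt x ≤ M := fun x => max_le hM0 (min_le_left _ _)
    have hφteq : ∀ x ∈ Icc a b, φt x = φ x := by
      intro x hx
      simp only [hφtdef]
      rw [min_eq_right (hbd x hx), max_eq_right (hnn x hx)]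
    have hQm : Measurable Q := Stmt9Aux.Q_meas hQc hQe
    -- bounds for the integrands
    have hQbd : ∀ c x, |Q (φt x - c)| ≤ Q (M + |c|) := by
      intro c x
      rw [abs_of_nonneg (hQ0 _)]
      apply Stmt9Aux.Q_abs_mono hQc hQe
      rw [abs_le]
      constructor
      · have := le_abs_self c
        have := hφtM x
        have := hφt0 x
        linarith
      · have := neg_abs_le c
        have := hφtM x
        have := hφt0 x
        linarith
    have hQintOn : ∀ (c : ℝ) (A : Set ℝ), volume A ≠ ⊤ →
        IntegrableOn (fun x => Q (φt x - c)) A volume := fun c A hA =>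
      Stmt9Aux.intOn (hQm.comp (hφtm.sub measurable_const)) (hQbd c) hA
    -- Ψ
    set Ψ : ℝ → ℝ := fun c => ∫ x in Icc a b, Q (φt x - c) with hΨdef
    have hΨ0 : ∀ c, 0 ≤ Ψ c := fun c => setIntegral_nonneg measurableSet_Icc fun x _ => hQ0 _
    -- bridge between Vc and real integrals, on subintervals
    have hbrgen : ∀ u v : ℝ, Icc u v ⊆ Icc a b → ∀ c, Vc Q φ (Icc u v) c =
        (volume (Icc u v))⁻¹ * ENNReal.ofReal (∫ t in Icc u v, Q (φt t - c)) := by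
      intro u v huv c
      show (volume (Icc u v))⁻¹ * (∫⁻ t in Icc u v, ENNReal.ofReal (Q (φ t - c))) = _
      congr 1
      have h1 : (∫⁻ t in Icc u v, ENNReal.ofReal (Q (φ t - c))) =
          ∫⁻ t in Icc u v, ENNReal.ofReal (Q (φt t - c)) := by
        apply setLIntegral_congr_fun measurableSet_Icc
        exact fun t ht => by rw [hφteq t (huv ht)]
      rw [h1, ← MeasureTheory.ofReal_integral_eq_lintegral_ofReal
        (hQintOn c _ (by rw [Real.volume_Icc]; exact ENNReal.ofReal_ne_top))
        (Eventually.of_forall fun t => hQ0 _)]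
    have hbr : ∀ c, Vc Q φ (Icc a b) c = (volume (Icc a b))⁻¹ * ENNReal.ofReal (Ψ c) :=
      fun c => hbrgen a b le_rfl c
    have hbridge_le : ∀ c c', (Vc Q φ (Icc a b) c ≤ Vc Q φ (Icc a b) c') ↔ Ψ c ≤ Ψ c' := by
      intro c c'
      rw [hbr, hbr, ENNReal.mul_le_mul_iff_right (ENNReal.inv_ne_zero.2 hvolJT)
        (ENNReal.inv_ne_top.2 hvolJ0)]
      exact ENNReal.ofReal_le_ofReal_iff (hΨ0 c')
    -- continuity of Ψ
    have hΨcont : Continuous Ψ := by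
      rw [Metric.continuous_iff]
      intro c ε' hε'
      set lo := -(|c| + 1) with hlo
      set hi := M + |c| + 1 with hhi
      set K := |Stmt9Aux.gQ Q lo| + |Stmt9Aux.gQ Q hi| with hK
      have hKgbd : ∀ w, lo ≤ w → w ≤ hi → |Stmt9Aux.gQ Q w| ≤ K := by
        intro w h1 h2
        have m1 := Stmt9Aux.gQ_mono hQc h1
        have m2 := Stmt9Aux.gQ_mono hQc h2
        rw [abs_le]
        constructor
        · have := neg_abs_le (Stmt9Aux.gQ Q lo)
          have := abs_nonneg (Stmt9Aux.gQ Q hi)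
          simp only [hK]
          linarith
        · have := le_abs_self (Stmt9Aux.gQ Q hi)
          have := abs_nonneg (Stmt9Aux.gQ Q lo)
          simp only [hK]
          linarith
      have hK0 : 0 ≤ K := by positivity
      have hden : (0:ℝ) < (b - a) * (2 * K) + 1 := by nlinarith
      refine ⟨min 1 (ε' / ((b - a) * (2 * K) + 1)), lt_min one_pos (div_pos hε' hden), ?_⟩
      intro c' hc'
      rw [Real.dist_eq] at hc' ⊢
      have hc'1 : |c' - c| < 1 := lt_of_lt_of_le hc' (min_le_left _ _)
      have hc'2 : |c' - c| < ε' / ((b - a) * (2 * K) + 1) := lt_of_lt_of_le hc' (min_le_right _ _)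
      have hptlip : ∀ x, |Q (φt x - c') - Q (φt x - c)| ≤ |c' - c| * (2 * K) := by
        intro x
        have hm : ∀ c'' : ℝ, |c'' - c| ≤ 1 → lo ≤ φt x - c'' ∧ φt x - c'' ≤ hi := by
          intro c'' h
          obtain ⟨hL, hR⟩ := abs_le.1 h
          constructor
          · simp only [hlo]
            have h1 := le_abs_self c
            have h2 := hφt0 x
            linarith
          · simp only [hhi]
            have h1 := neg_abs_le c
            have h2 := hφtM x
            linarith
        obtain ⟨h1, h2⟩ := hm c' hc'1.le
        obtain ⟨h3, h4⟩ := hm c (by simp)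
        calc |Q (φt x - c') - Q (φt x - c)| ≤
            |(φt x - c') - (φt x - c)| * (|Stmt9Aux.gQ Q (φt x - c')| + |Stmt9Aux.gQ Q (φt x - c)|) :=
              Stmt9Aux.Q_lip hQc _ _
          _ ≤ |c' - c| * (2 * K) := by
              have e : |(φt x - c') - (φt x - c)| = |c' - c| := by
                rw [show (φt x - c') - (φt x - c) = -(c' - c) by ring, abs_neg]
              rw [e]
              have := hKgbd _ h1 h2
              have := hKgbd _ h3 h4
              have := abs_nonneg (c' - c)
              nlinarith
      have hint1 := hQintOn c' (Icc a b) (by rw [hvolJ]; exact ENNReal.ofReal_ne_top)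
      have hint2 := hQintOn c (Icc a b) (by rw [hvolJ]; exact ENNReal.ofReal_ne_top)
      have hsub : |Ψ c' - Ψ c| ≤ (b - a) * (|c' - c| * (2 * K)) := by
        rw [hΨdef]
        simp only
        rw [← integral_sub hint1 hint2]
        calc |∫ x in Icc a b, (Q (φt x - c') - Q (φt x - c))| ≤
            ∫ x in Icc a b, |Q (φt x - c') - Q (φt x - c)| := by
              have := norm_integral_le_integral_norm (μ := volume.restrict (Icc a b))
                (fun x => Q (φt x - c') - Q (φt x - c))
              simpa [Real.norm_eq_abs] using this
          _ ≤ ∫ _x in Icc a b, |c' - c| * (2 * K) := by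
              refine setIntegral_mono_on ((hint1.sub hint2).abs) ?_ measurableSet_Icc
                fun x _ => hptlip x
              exact integrableOn_const (by rw [hvolJ]; exact ENNReal.ofReal_ne_top)
          _ = (b - a) * (|c' - c| * (2 * K)) := by
              rw [setIntegral_const, smul_eq_mul, measureReal_def, Real.volume_Icc,
                ENNReal.toReal_ofReal (by linarith)]
      calc |Ψ c' - Ψ c| ≤ (b - a) * (|c' - c| * (2 * K)) := hsub
        _ ≤ |c' - c| * ((b - a) * (2 * K) + 1) := by nlinarith [abs_nonneg (c' - c)]
        _ < (ε' / ((b - a) * (2 * K) + 1)) * ((b - a) * (2 * K) + 1) := by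
            exact mul_lt_mul_of_pos_right hc'2 hden
        _ = ε' := div_mul_cancel₀ _ hden.ne'
    -- positivity of gQ at ε
    have hQ0ε : Q 0 < Q ε := Stmt9Aux.Q_zero_lt hQ hQe hε
    have hgε : 0 < Stmt9Aux.gQ Q ε := by
      have h1 := Stmt9Aux.gQ_ge hQc ε (h := ε) hε
      have h2 : ε - ε = 0 := by ring
      rw [h2] at h1
      have : 0 < (Q ε - Q 0) / ε := div_pos (by linarith) hε
      linarith
    set gε := Stmt9Aux.gQ Q ε with hgεdef
    -- coercivity
    set T := (Ψ ε + 1) / ((b - a) * gε) with hT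
    have hbagε : (0:ℝ) < (b - a) * gε := mul_pos (by linarith) hgε
    have hTpos : 0 < T := div_pos (by linarith [hΨ0 ε]) hbagε
    set R := max (M + ε + T + 1) (ε + T + 1) with hR
    have hRε : ε ∈ Icc (-R) R := by
      constructor
      · have : 0 < R := lt_of_lt_of_le (by positivity) (le_max_right _ _)
        linarith
      · have := le_max_right (M + ε + T + 1) (ε + T + 1)
        linarith
    have hconst_int : ∀ (k : ℝ) (A : Set ℝ), volume A ≠ ⊤ →
        IntegrableOn (fun _ : ℝ => k) A volume := fun k A hA =>
      integrableOn_const hA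
    have hlow : ∀ k (c : ℝ), (∀ x, k ≤ Q (φt x - c)) → (b - a) * k ≤ Ψ c := by
      intro k c hk
      have h1 : (∫ _x in Icc a b, k) ≤ Ψ c := by
        refine setIntegral_mono_on (hconst_int k _ (by rw [hvolJ]; exact ENNReal.ofReal_ne_top))
          (hQintOn c _ (by rw [hvolJ]; exact ENNReal.ofReal_ne_top)) measurableSet_Icc
          fun x _ => hk x
      rw [setIntegral_const, smul_eq_mul, measureReal_def, Real.volume_Icc,
        ENNReal.toReal_ofReal (by linarith)] at h1
      exact h1
    have hcoerc : ∀ c, R ≤ |c| → Ψ ε ≤ Ψ c := by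
      intro c hc
      rcases le_or_gt 0 c with hc0 | hc0
      · rw [abs_of_nonneg hc0] at hc
        have hcM : M + ε + T + 1 ≤ c := le_trans (le_max_left _ _) hc
        have hpt : ∀ x, Q ε + (c - M - ε) * gε ≤ Q (φt x - c) := by
          intro x
          have h1 : Q (φt x - c) = Q (c - φt x) := by
            rw [← hQe (c - φt x)]
            congr 1
            ring
          rw [h1]
          have h2 := Stmt9Aux.gQ_subgrad hQc ε (c - φt x)
          have h3 : (c - M - ε) * gε ≤ (c - φt x - ε) * gε := by
            apply mul_le_mul_of_nonneg_right _ hgε.le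
            have := hφtM x
            linarith
          rw [hgεdef]
          linarith
        have h4 := hlow _ c hpt
        have h5 : (b - a) * gε * T = Ψ ε + 1 := by
          rw [hT, mul_comm ((b-a)*gε) ((Ψ ε + 1) / ((b - a) * gε)), div_mul_cancel₀ _ hbagε.ne']
        have h6 : (b - a) * gε * (T + 1) ≤ (b - a) * gε * (c - M - ε) :=
          mul_le_mul_of_nonneg_left (by linarith) hbagε.le
        have h7 : (b - a) * (Q ε + (c - M - ε) * gε) =
            (b - a) * Q ε + (b - a) * gε * (c - M - ε) := by ring
        have h8 : 0 ≤ (b - a) * Q ε := mul_nonneg (by linarith) (hQ0 ε)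
        nlinarith
      · rw [abs_of_neg hc0] at hc
        have hcM : ε + T + 1 ≤ -c := le_trans (le_max_right _ _) hc
        have hpt : ∀ x, Q ε + (-c - ε) * gε ≤ Q (φt x - c) := by
          intro x
          have h2 := Stmt9Aux.gQ_subgrad hQc ε (φt x - c)
          have h3 : (-c - ε) * gε ≤ (φt x - c - ε) * gε := by
            apply mul_le_mul_of_nonneg_right _ hgε.le
            have := hφt0 x
            linarith
          rw [hgεdef]
          linarith
        have h4 := hlow _ c hpt
        have h5 : (b - a) * gε * T = Ψ ε + 1 := by
          rw [hT, mul_comm ((b-a)*gε) ((Ψ ε + 1) / ((b - a) * gε)), div_mul_cancel₀ _ hbagε.ne']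
        have h6 : (b - a) * gε * (T + 1) ≤ (b - a) * gε * (-c - ε) :=
          mul_le_mul_of_nonneg_left (by linarith) hbagε.le
        have h7 : (b - a) * (Q ε + (-c - ε) * gε) =
            (b - a) * Q ε + (b - a) * gε * (-c - ε) := by ring
        have h8 : 0 ≤ (b - a) * Q ε := mul_nonneg (by linarith) (hQ0 ε)
        nlinarith
    -- minimizer of Ψ
    obtain ⟨c₀, hc₀mem, hc₀min⟩ := isCompact_Icc.exists_isMinOn ⟨ε, hRε⟩ hΨcont.continuousOn
    have hglobal : ∀ c', Ψ c₀ ≤ Ψ c' := by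
      intro c'
      rcases le_or_gt |c'| R with h | h
      · exact isMinOn_iff.1 hc₀min c' (abs_le.1 h)
      · exact le_trans (isMinOn_iff.1 hc₀min ε hRε) (hcoerc c' h.le)
    have hPex : ∃ c, ∀ c', Vc Q φ (Icc a b) c ≤ Vc Q φ (Icc a b) c' :=
      ⟨c₀, fun c' => (hbridge_le c₀ c').2 (hglobal c')⟩
    have hPCC : ∀ c', Vc Q φ (Icc a b) (CC Q φ (Icc a b)) ≤ Vc Q φ (Icc a b) c' :=
      Classical.epsilon_spec hPex
    have hΨCC : ∀ c', Ψ (CC Q φ (Icc a b)) ≤ Ψ c' := fun c' => (hbridge_le _ c').1 (hPCC c')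
    set cm := CC Q φ (Icc a b) with hcmdef
    have hcm : cm < ε := hCC
    set δ₀ := ε - cm with hδ₀
    have hδ₀pos : 0 < δ₀ := by simp only [hδ₀]; linarith
    -- the two integrands
    set sf : ℝ → ℝ := fun x => Stmt9Aux.gQ Q (φt x - ε) with hsfdef
    set df : ℝ → ℝ := fun x => Q (φt x - ε) - Q ε with hdfdef
    have hsfm : Measurable sf := (Stmt9Aux.gQ_mono hQc).measurable.comp (hφtm.sub measurable_const)
    have hdfm : Measurable df := (hQm.comp (hφtm.sub measurable_const)).sub measurable_const
    set Bs := |Stmt9Aux.gQ Q (-(M + ε))| + |Stmt9Aux.gQ Q (M + ε)| with hBs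
    have hBs' : ∀ x, |sf x| ≤ Bs := by
      intro x
      have h1 : -(M + ε) ≤ φt x - ε := by have := hφt0 x; linarith
      have h2 : φt x - ε ≤ M + ε := by have := hφtM x; linarith
      have m1 := Stmt9Aux.gQ_mono hQc h1
      have m2 := Stmt9Aux.gQ_mono hQc h2
      rw [abs_le]
      constructor
      · have := neg_abs_le (Stmt9Aux.gQ Q (-(M + ε)))
        have := abs_nonneg (Stmt9Aux.gQ Q (M + ε))
        simp only [hBs, hsfdef]
        linarith
      · have := le_abs_self (Stmt9Aux.gQ Q (M + ε))
        have := abs_nonneg (Stmt9Aux.gQ Q (-(M + ε)))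
        simp only [hBs, hsfdef]
        linarith
    set Bd := Q (M + ε) + Q ε with hBd
    have hBd' : ∀ x, |df x| ≤ Bd := by
      intro x
      have h1 : |φt x - ε| ≤ M + ε := by
        rw [abs_le]
        constructor
        · have := hφt0 x; linarith
        · have := hφtM x; linarith
      have h2 : Q (φt x - ε) ≤ Q (M + ε) := Stmt9Aux.Q_abs_mono hQc hQe h1
      rw [abs_le]
      constructor
      · have := hQ0 (φt x - ε)
        have := hQ0 (M + ε)
        simp only [hBd, hdfdef]
        linarith
      · have := hQ0 ε
        simp only [hBd, hdfdef]
        linarith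
    -- anchor 1
    have hanchor1 : (∫ t in a..b, sf t) ≤ 0 := by
      have hvolIoc : volume (Ioc a b) ≠ ⊤ := measure_Ioc_lt_top.ne
      have hint1 := hQintOn cm (Ioc a b) hvolIoc
      have hint2 := hQintOn ε (Ioc a b) hvolIoc
      have hpt : ∀ x, sf x ≤ (Q (φt x - cm) - Q (φt x - ε)) / δ₀ := by
        intro x
        have h1 := Stmt9Aux.gQ_le hQc (φt x - ε) hδ₀pos
        have he : φt x - ε + δ₀ = φt x - cm := by simp only [hδ₀]; ring
        rw [he] at h1
        exact h1
      rw [intervalIntegral.integral_of_le hab.le]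
      have hintsf : IntegrableOn sf (Ioc a b) volume := Stmt9Aux.intOn hsfm hBs' hvolIoc
      calc (∫ t in Ioc a b, sf t) ≤
          ∫ t in Ioc a b, (Q (φt t - cm) - Q (φt t - ε)) / δ₀ := by
            refine setIntegral_mono_on hintsf ((hint1.sub hint2).div_const δ₀)
              measurableSet_Ioc fun t _ => hpt t
        _ = ((∫ t in Ioc a b, Q (φt t - cm)) - ∫ t in Ioc a b, Q (φt t - ε)) / δ₀ := by
            rw [integral_div, integral_sub hint1 hint2]
        _ ≤ 0 := by
            apply div_nonpos_of_nonpos_of_nonneg _ hδ₀pos.le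
            have e1 : (∫ t in Ioc a b, Q (φt t - cm)) = Ψ cm :=
              (integral_Icc_eq_integral_Ioc).symm
            have e2 : (∫ t in Ioc a b, Q (φt t - ε)) = Ψ ε :=
              (integral_Icc_eq_integral_Ioc).symm
            rw [e1, e2]
            have h9 : Ψ cm ≤ Ψ ε := hΨCC ε
            linarith
    -- anchor 2
    have hanchor2 : 0 < (∫ t in a..b, df t) := by
      have hΨε : Q ε * (b - a) < Ψ ε := by
        by_contra hcon
        push_neg at hcon
        apply hVe
        rw [hbr ε]
        calc (volume (Icc a b))⁻¹ * ENNReal.ofReal (Ψ ε) ≤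
            (volume (Icc a b))⁻¹ * ENNReal.ofReal (Q ε * (b - a)) :=
              mul_le_mul_right (ENNReal.ofReal_le_ofReal hcon) _
          _ = (volume (Icc a b))⁻¹ * (volume (Icc a b) * ENNReal.ofReal (Q ε)) := by
              rw [hvolJ, ← ENNReal.ofReal_mul (by linarith : (0:ℝ) ≤ b - a)]
              congr 1
              ring
          _ = ENNReal.ofReal (Q ε) := by
              rw [← mul_assoc, ENNReal.inv_mul_cancel hvolJ0 hvolJT, one_mul]
      have hvolIoc : volume (Ioc a b) ≠ ⊤ := measure_Ioc_lt_top.ne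
      have hint2 := hQintOn ε (Ioc a b) hvolIoc
      have he : (∫ t in Ioc a b, df t) = Ψ ε - Q ε * (b - a) := by
        simp only [hdfdef]
        rw [integral_sub hint2 (hconst_int _ _ hvolIoc)]
        rw [setIntegral_const, smul_eq_mul, measureReal_def, Real.volume_Ioc,
          ENNReal.toReal_ofReal (by linarith)]
        have e2 : (∫ t in Ioc a b, Q (φt t - ε)) = Ψ ε :=
          (integral_Icc_eq_integral_Ioc).symm
        rw [e2]
        ring
      rw [intervalIntegral.integral_of_le hab.le, he]
      linarith
    -- the gap condition
    set γ := (Q ε - Q 0) / ε with hγdef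
    have hγpos : 0 < γ := div_pos (by linarith) hε
    have hsd : ∀ x, 0 < df x → γ ≤ sf x := by
      intro x hx
      simp only [hdfdef] at hx
      have h1 : ε < |φt x - ε| := by
        by_contra hcon
        push_neg at hcon
        have := Stmt9Aux.Q_abs_mono hQc hQe hcon
        linarith
      have h2 : ε < φt x - ε := by
        rcases abs_cases (φt x - ε) with ⟨he, _⟩ | ⟨he, _⟩
        · rw [he] at h1; exact h1
        · exfalso
          rw [he] at h1
          have := hφt0 x
          linarith
      have h3 : γ ≤ (Q (φt x - ε) - Q 0) / (φt x - ε) := by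
        have hsec := hQc.secant_mono (a := (0:ℝ)) (x := ε) (y := φt x - ε)
          (mem_univ _) (mem_univ _) (mem_univ _) (ne_of_gt hε)
          (ne_of_gt (by linarith)) (by linarith)
        simp only [sub_zero] at hsec
        rw [hγdef]
        exact hsec
      have h4 : (Q (φt x - ε) - Q 0) / (φt x - ε) ≤ Stmt9Aux.gQ Q (φt x - ε) := by
        have h5 := Stmt9Aux.gQ_ge hQc (φt x - ε) (h := φt x - ε) (by linarith)
        have he : φt x - ε - (φt x - ε) = 0 := by ring
        rw [he] at h5
        exact h5
      simp only [hsfdef]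
      linarith
    -- extraction of the balanced interval
    obtain ⟨x, y, hax, hxy, hyb, hs0, hd0⟩ := Stmt9Aux.exists_balanced sf df hsfm hdfm
      Bs Bd hBs' hBd' γ hγpos hsd hab hanchor1 hanchor2
    -- the contradiction with hW
    have hsubL : Icc x y ⊆ Icc a b := Icc_subset_Icc hax hyb
    have hvolL : volume (Icc x y) = ENNReal.ofReal (y - x) := Real.volume_Icc
    have hvolL0 : volume (Icc x y) ≠ 0 := by
      rw [hvolL]
      simp only [ne_eq, ENNReal.ofReal_eq_zero, not_le]
      linarith
    have hvolLT : volume (Icc x y) ≠ ⊤ := by rw [hvolL]; exact ENNReal.ofReal_ne_top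
    have hvolIocL : volume (Ioc x y) ≠ ⊤ := measure_Ioc_lt_top.ne
    have hptc : ∀ (c t : ℝ), Q (φt t - ε) + (ε - c) * sf t ≤ Q (φt t - c) := by
      intro c t
      have h1 := Stmt9Aux.gQ_subgrad hQc (φt t - ε) (φt t - c)
      have he : φt t - c - (φt t - ε) = ε - c := by ring
      rw [he] at h1
      simp only [hsfdef]
      exact h1
    have hkey : ∀ c, Q ε * (y - x) ≤ ∫ t in Icc x y, Q (φt t - c) := by
      intro c
      have hintd : IntegrableOn df (Ioc x y) volume := Stmt9Aux.intOn hdfm hBd' hvolIocL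
      have hints : IntegrableOn sf (Ioc x y) volume := Stmt9Aux.intOn hsfm hBs' hvolIocL
      have hintQε := hQintOn ε (Ioc x y) hvolIocL
      have hintQc := hQintOn c (Ioc x y) hvolIocL
      have h1 : (∫ t in Ioc x y, Q (φt t - ε)) = Q ε * (y - x) + (∫ t in Ioc x y, df t) := by
        have he : ∀ t, Q (φt t - ε) = Q ε + df t := by
          intro t
          simp only [hdfdef]
          ring
        calc (∫ t in Ioc x y, Q (φt t - ε)) = ∫ t in Ioc x y, (Q ε + df t) := by
              exact setIntegral_congr_fun measurableSet_Ioc fun t _ => he t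
          _ = (∫ _t in Ioc x y, Q ε) + ∫ t in Ioc x y, df t := by
              exact integral_add (hconst_int _ _ hvolIocL) hintd
          _ = Q ε * (y - x) + (∫ t in Ioc x y, df t) := by
              rw [setIntegral_const, smul_eq_mul, measureReal_def, Real.volume_Ioc,
                ENNReal.toReal_ofReal (by linarith)]
              ring
      have h2 : (∫ t in Ioc x y, (Q (φt t - ε) + (ε - c) * sf t)) ≤
          ∫ t in Ioc x y, Q (φt t - c) := by
        refine setIntegral_mono_on (hintQε.add (hints.const_mul _)) hintQc
          measurableSet_Ioc fun t _ => hptc c t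
      have h3 : (∫ t in Ioc x y, (Q (φt t - ε) + (ε - c) * sf t)) =
          (∫ t in Ioc x y, Q (φt t - ε)) := by
        rw [integral_add hintQε (hints.const_mul _), integral_const_mul]
        have hs0' : (∫ t in Ioc x y, sf t) = 0 := by
          rw [← intervalIntegral.integral_of_le hxy.le]
          exact hs0
        rw [hs0']
        ring
      have hd0' : 0 ≤ (∫ t in Ioc x y, df t) := by
        rw [← intervalIntegral.integral_of_le hxy.le]
        exact hd0
      rw [integral_Icc_eq_integral_Ioc]
      calc Q ε * (y - x) ≤ Q ε * (y - x) + (∫ t in Ioc x y, df t) := by linarith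
        _ = (∫ t in Ioc x y, Q (φt t - ε)) := h1.symm
        _ = (∫ t in Ioc x y, (Q (φt t - ε) + (ε - c) * sf t)) := h3.symm
        _ ≤ ∫ t in Ioc x y, Q (φt t - c) := h2
    have hVcL : ∀ c, ENNReal.ofReal (Q ε) ≤ Vc Q φ (Icc x y) c := by
      intro c
      rw [hbrgen x y hsubL c]
      have h5 : volume (Icc x y) * ENNReal.ofReal (Q ε) ≤
          ENNReal.ofReal (∫ t in Icc x y, Q (φt t - c)) := by
        rw [hvolL, ← ENNReal.ofReal_mul (by linarith : (0:ℝ) ≤ y - x)]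
        refine ENNReal.ofReal_le_ofReal ?_
        calc (y - x) * Q ε = Q ε * (y - x) := by ring
          _ ≤ _ := hkey c
      calc ENNReal.ofReal (Q ε) =
          (volume (Icc x y))⁻¹ * (volume (Icc x y) * ENNReal.ofReal (Q ε)) := by
            rw [← mul_assoc, ENNReal.inv_mul_cancel hvolL0 hvolLT, one_mul]
        _ ≤ (volume (Icc x y))⁻¹ * ENNReal.ofReal (∫ t in Icc x y, Q (φt t - c)) :=
            mul_le_mul_right h5 _
    have hVL : ENNReal.ofReal (Q ε) ≤ V Q φ (Icc x y) := le_iInf hVcL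
    have hWge : ENNReal.ofReal (Q ε) ≤ W Q φ (Icc a b) := by
      refine le_trans hVL ?_
      have step1 : V Q φ (Icc x y) ≤ ⨆ (_ : Icc x y ⊆ Icc a b), V Q φ (Icc x y) :=
        le_iSup_of_le hsubL le_rfl
      refine le_trans step1 ?_
      have step2 : (⨆ (_ : Icc x y ⊆ Icc a b), V Q φ (Icc x y)) ≤
          ⨆ (b' : ℝ) (_ : Icc x b' ⊆ Icc a b), V Q φ (Icc x b') :=
        le_iSup_of_le y le_rfl
      refine le_trans step2 ?_
      exact le_iSup_of_le x le_rfl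
    exact absurd hW (not_lt.2 hWge)
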